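/- In an r=5 regular code of girth 6, any (6,8) absorbing set containing a check node of degree greater than 2 (within the absorbing set subgraph) must contain a (4,8) absorbing set as a subgraph. -/

import Mathlib

open Finset

def chkDeg {V C : Type*} [DecidableEq C] (N : V → Finset C) (S : Finset V) (c : C) : ℕ :=
  (S.filter fun v => c ∈ N v).card

def oddChecks {V C : Type*} [DecidableEq C] (N : V → Finset C) (S : Finset V) : Finset C :=
  (S.biUnion N).filter fun c => chkDeg N S c % 2 = 1

def isAbsorbing {V C : Type*} [DecidableEq C] (N : V → Finset C) (S : Finset V) : Prop :=
  ∀ v ∈ S, ((N v).filter fun c => chkDeg N S c % 2 = 1).card <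
    ((N v).filter fun c => chkDeg N S c % 2 = 0).card

set_option linter.unusedSectionVars false

namespace AbsAux

variable {V C : Type*} [DecidableEq V] [DecidableEq C] (N : V → Finset C)

lemma filter_biUnion_filter (T : Finset V) (P : C → Prop) [DecidablePred P]
    {v : V} (hv : v ∈ T) :
    ((T.biUnion N).filter P).filter (· ∈ N v) = (N v).filter P := by
  ext c
  simp only [mem_filter, mem_biUnion]
  constructor
  · rintro ⟨⟨_, hP⟩, hc⟩; exact ⟨hc, hP⟩
  · rintro ⟨hc, hP⟩; exact ⟨⟨⟨v, hv, hc⟩, hP⟩, hc⟩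

lemma dc (T : Finset V) (P : C → Prop) [DecidablePred P] :
    ∑ c ∈ (T.biUnion N).filter P, chkDeg N T c = ∑ v ∈ T, ((N v).filter P).card := by
  simp only [chkDeg, card_filter]
  rw [Finset.sum_comm]
  refine Finset.sum_congr rfl fun v hv => ?_
  rw [← card_filter, ← card_filter, filter_biUnion_filter N T P hv]

lemma dc_total (T : Finset V) :
    ∑ c ∈ T.biUnion N, chkDeg N T c = ∑ v ∈ T, (N v).card := by
  have := dc N T (fun _ => True)
  simpa using this

lemma deg_pos {T : Finset V} {c : C} (hc : c ∈ T.biUnion N) : 0 < chkDeg N T c := by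
  rw [mem_biUnion] at hc
  obtain ⟨v, hv, hcv⟩ := hc
  exact card_pos.mpr ⟨v, mem_filter.mpr ⟨hv, hcv⟩⟩

lemma mem_biUnion_of_deg_pos {T : Finset V} {c : C} (h : 0 < chkDeg N T c) :
    c ∈ T.biUnion N := by
  obtain ⟨v, hv⟩ := card_pos.mp h
  rw [mem_filter] at hv
  exact mem_biUnion.mpr ⟨v, hv.1, hv.2⟩

lemma deg_le (T : Finset V) (c : C) : chkDeg N T c ≤ T.card := card_filter_le _ _



lemma mul_pred (n : ℕ) : n * (n - 1) = n * n - n := by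
  cases n with
  | zero => rfl
  | succ m =>
    have h : (m+1)*(m+1) = (m+1)*m + (m+1) := by ring
    rw [Nat.succ_sub_one, h, Nat.add_sub_cancel]

lemma gsum (S : Finset V) :
    ∑ c ∈ S.biUnion N, chkDeg N S c * (chkDeg N S c - 1)
      = ∑ p ∈ S.offDiag, (N p.1 ∩ N p.2).card := by
  have step1 : ∀ c, chkDeg N S c * (chkDeg N S c - 1)
      = (S.offDiag.filter fun p => c ∈ N p.1 ∧ c ∈ N p.2).card := by
    intro c
    rw [mul_pred]
    have : (S.filter fun v => c ∈ N v).offDiag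
        = S.offDiag.filter fun p => c ∈ N p.1 ∧ c ∈ N p.2 := by
      ext ⟨a, b⟩
      simp only [mem_offDiag, mem_filter]
      tauto
    rw [chkDeg, ← offDiag_card, this]
  calc ∑ c ∈ S.biUnion N, chkDeg N S c * (chkDeg N S c - 1)
      = ∑ c ∈ S.biUnion N, (S.offDiag.filter fun p => c ∈ N p.1 ∧ c ∈ N p.2).card :=
        Finset.sum_congr rfl fun c _ => step1 c
    _ = ∑ p ∈ S.offDiag, ((S.biUnion N).filter fun c => c ∈ N p.1 ∧ c ∈ N p.2).card := by
        simp only [card_filter]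
        exact Finset.sum_comm
    _ = ∑ p ∈ S.offDiag, (N p.1 ∩ N p.2).card := by
        refine Finset.sum_congr rfl fun p hp => ?_
        congr 1
        ext c
        simp only [mem_filter, mem_biUnion, mem_inter]
        rw [mem_offDiag] at hp
        exact ⟨fun h => h.2, fun h => ⟨⟨p.1, hp.1, h.1⟩, h⟩⟩

lemma cov_count (hgirth : ∀ v w : V, v ≠ w → (N v ∩ N w).card ≤ 1) (S : Finset V) :
    ∑ p ∈ S.offDiag, (N p.1 ∩ N p.2).card
      + (S.offDiag.filter fun p => N p.1 ∩ N p.2 = ∅).card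
      = S.card * S.card - S.card := by
  have step : ∀ p ∈ S.offDiag, (N p.1 ∩ N p.2).card
      = if N p.1 ∩ N p.2 = ∅ then 0 else 1 := by
    intro p hp
    rw [mem_offDiag] at hp
    have h1 := hgirth p.1 p.2 hp.2.2
    split_ifs with h
    · rw [h]; rfl
    · have := Finset.card_pos.mpr (nonempty_iff_ne_empty.mpr h)
      omega
  rw [Finset.sum_congr rfl step]
  have : ∑ p ∈ S.offDiag, (if N p.1 ∩ N p.2 = ∅ then 0 else 1)
      = (S.offDiag.filter fun p => ¬ (N p.1 ∩ N p.2 = ∅)).card := by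
    rw [card_filter]
    refine Finset.sum_congr rfl fun p _ => ?_
    by_cases h : N p.1 ∩ N p.2 = ∅ <;> simp [h]
  rw [this, ← offDiag_card]
  rw [← Finset.card_filter_add_card_filter_not
    (s := S.offDiag) (p := fun p => N p.1 ∩ N p.2 = ∅)]
  omega

lemma fiber (S : Finset V) (F : ℕ → ℕ) :
    ∑ c ∈ S.biUnion N, F (chkDeg N S c) =
      ∑ d ∈ Finset.range (S.card + 1),
        ((S.biUnion N).filter fun c => chkDeg N S c = d).card * F d := by
  rw [← Finset.sum_fiberwise_of_maps_to (g := fun c => chkDeg N S c)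
      (t := Finset.range (S.card + 1))
      (fun c _ => mem_range.mpr (Nat.lt_succ_of_le (card_filter_le _ _)))]
  refine Finset.sum_congr rfl fun d _ => ?_
  rw [Finset.sum_congr rfl (fun c hc => by rw [(mem_filter.mp hc).2]), Finset.sum_const,
    smul_eq_mul]




lemma deg_two_of_pair {T : Finset V} {v w : V} (hv : v ∈ T) (hw : w ∈ T) (hvw : v ≠ w)
    {c : C} (hcv : c ∈ N v) (hcw : c ∈ N w) : 2 ≤ chkDeg N T c := by
  have hsub : ({v, w} : Finset V) ⊆ T.filter fun u => c ∈ N u := by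
    intro x hx
    rcases Finset.mem_insert.mp hx with h | h
    · exact mem_filter.mpr ⟨h ▸ hv, h ▸ hcv⟩
    · have := Finset.mem_singleton.mp h
      exact mem_filter.mpr ⟨this ▸ hw, this ▸ hcw⟩
  calc 2 = ({v, w} : Finset V).card := (Finset.card_pair hvw).symm
    _ ≤ _ := Finset.card_le_card hsub

lemma deg_three_of_triple {T : Finset V} {v w x : V} (hv : v ∈ T) (hw : w ∈ T) (hx : x ∈ T)
    (hvw : v ≠ w) (hvx : v ≠ x) (hwx : w ≠ x)
    {c : C} (hcv : c ∈ N v) (hcw : c ∈ N w) (hcx : c ∈ N x) : 3 ≤ chkDeg N T c := by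
  have hsub : ({v, w, x} : Finset V) ⊆ T.filter fun u => c ∈ N u := by
    intro y hy
    simp only [Finset.mem_insert, Finset.mem_singleton] at hy
    rcases hy with h | h | h
    · exact mem_filter.mpr ⟨h ▸ hv, h ▸ hcv⟩
    · exact mem_filter.mpr ⟨h ▸ hw, h ▸ hcw⟩
    · exact mem_filter.mpr ⟨h ▸ hx, h ▸ hcx⟩
  have hcard : ({v, w, x} : Finset V).card = 3 := by
    rw [Finset.card_insert_of_notMem (by simp [hvw, hvx]),
      Finset.card_pair hwx]
  calc 3 = ({v, w, x} : Finset V).card := hcard.symm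
    _ ≤ _ := Finset.card_le_card hsub

lemma even_filter_card (hreg : ∀ v, (N v).card = 5)
    (hgirth : ∀ v w : V, v ≠ w → (N v ∩ N w).card ≤ 1)
    (T : Finset V) (hT : T.card = 4)
    (hcov : ∀ v ∈ T, ∀ w ∈ T, v ≠ w → (N v ∩ N w).Nonempty)
    (hbig : ∀ c, chkDeg N T c ≤ 2) {v : V} (hv : v ∈ T) :
    ((N v).filter fun c => chkDeg N T c % 2 = 0).card = 3 := by
  classical
  obtain ⟨c0, hc0⟩ : (N v).Nonempty := card_pos.mp (by rw [hreg]; norm_num)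
  have herase : (T.erase v).card = 3 := by rw [card_erase_of_mem hv, hT]
  apply le_antisymm
  · -- ≤ 3 : inject even checks at v into T.erase v
    have : ((N v).filter fun c => chkDeg N T c % 2 = 0).card ≤ (T.erase v).card := by
      apply Finset.card_le_card_of_injOn
        (fun c => if h : ((T.filter fun u => c ∈ N u).erase v).Nonempty then h.choose else v)
      · intro c hc
        rw [mem_coe, mem_filter] at hc
        have hd1 : 1 ≤ chkDeg N T c := by
          exact card_pos.mpr ⟨v, mem_filter.mpr ⟨hv, hc.1⟩⟩
        have hd2 : chkDeg N T c = 2 := by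
          have := hbig c; have := hc.2; omega
        have hne : ((T.filter fun u => c ∈ N u).erase v).Nonempty := by
          rw [← card_pos, card_erase_of_mem (mem_filter.mpr ⟨hv, hc.1⟩)]
          rw [chkDeg] at hd2; omega
        dsimp only
        rw [dif_pos hne]
        have hspec := hne.choose_spec
        rw [mem_erase, mem_filter] at hspec
        exact mem_erase.mpr ⟨hspec.1, hspec.2.1⟩
      · intro c hc c' hc' heq
        simp only [coe_filter, Set.mem_setOf_eq] at hc hc'
        by_contra hne
        have key : ∀ c'' , c'' ∈ N v → chkDeg N T c'' % 2 = 0 →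
            ∀ h : ((T.filter fun u => c'' ∈ N u).erase v).Nonempty,
              h.choose ∈ T.erase v ∧ c'' ∈ N h.choose := by
          intro c'' _ _ h
          have hspec := h.choose_spec
          rw [mem_erase, mem_filter] at hspec
          exact ⟨mem_erase.mpr ⟨hspec.1, hspec.2.1⟩, hspec.2.2⟩
        have hne1 : ((T.filter fun u => c ∈ N u).erase v).Nonempty := by
          have hd2 : chkDeg N T c = 2 := by
            have h1 : 1 ≤ chkDeg N T c := card_pos.mpr ⟨v, mem_filter.mpr ⟨hv, hc.1⟩⟩
            have := hbig c; have := hc.2; omega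
          rw [← card_pos, card_erase_of_mem (mem_filter.mpr ⟨hv, hc.1⟩)]
          rw [chkDeg] at hd2; omega
        have hne2 : ((T.filter fun u => c' ∈ N u).erase v).Nonempty := by
          have hd2 : chkDeg N T c' = 2 := by
            have h1 : 1 ≤ chkDeg N T c' := card_pos.mpr ⟨v, mem_filter.mpr ⟨hv, hc'.1⟩⟩
            have := hbig c'; have := hc'.2; omega
          rw [← card_pos, card_erase_of_mem (mem_filter.mpr ⟨hv, hc'.1⟩)]
          rw [chkDeg] at hd2; omega
        dsimp only at heq
        rw [dif_pos hne1, dif_pos hne2] at heq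
        obtain ⟨hw1, hcw1⟩ := key c hc.1 hc.2 hne1
        obtain ⟨hw2, hcw2⟩ := key c' hc'.1 hc'.2 hne2
        set w := hne1.choose with hwdef
        rw [mem_erase] at hw1
        have hvw : v ≠ w := Ne.symm hw1.1
        have : 2 ≤ (N v ∩ N w).card := by
          have hsub : ({c, c'} : Finset C) ⊆ N v ∩ N w := by
            intro y hy
            rcases Finset.mem_insert.mp hy with h | h
            · exact h ▸ mem_inter.mpr ⟨hc.1, hcw1⟩
            · have hyc : y = c' := Finset.mem_singleton.mp h
              subst hyc
              refine mem_inter.mpr ⟨hc'.1, ?_⟩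
              show y ∈ N w
              rw [heq]
              exact hcw2
          calc 2 = ({c, c'} : Finset C).card := (Finset.card_pair hne).symm
            _ ≤ _ := Finset.card_le_card hsub
        exact absurd (hgirth v w hvw) (by omega)
    omega
  · -- ≥ 3 : inject T.erase v into even checks at v
    have : (T.erase v).card ≤ ((N v).filter fun c => chkDeg N T c % 2 = 0).card := by
      apply Finset.card_le_card_of_injOn
        (fun w => if h : (N v ∩ N w).Nonempty then h.choose else c0)
      · intro w hw
        rw [mem_coe, mem_erase] at hw
        have h : (N v ∩ N w).Nonempty := hcov v hv w hw.2 (Ne.symm hw.1)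
        dsimp only
        rw [dif_pos h]
        have hspec := h.choose_spec
        rw [mem_inter] at hspec
        have h2 : chkDeg N T h.choose = 2 := by
          have := deg_two_of_pair N hv hw.2 (Ne.symm hw.1) hspec.1 hspec.2
          have := hbig h.choose; omega
        exact mem_filter.mpr ⟨hspec.1, by omega⟩
      · intro w hw w' hw' heq
        simp only [Finset.coe_erase, Set.mem_diff, Set.mem_singleton_iff,
          Finset.mem_coe] at hw hw'
        dsimp only at heq
        by_contra hneww
        have h : (N v ∩ N w).Nonempty := hcov v hv w hw.1 (fun hh => hw.2 hh.symm)
        have h' : (N v ∩ N w').Nonempty := hcov v hv w' hw'.1 (fun hh => hw'.2 hh.symm)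
        rw [dif_pos h, dif_pos h'] at heq
        have hs := h.choose_spec
        have hs' := h'.choose_spec
        rw [mem_inter] at hs hs'
        have : 3 ≤ chkDeg N T h.choose := by
          apply deg_three_of_triple N hv hw.1 hw'.1 (fun hh => hw.2 hh.symm)
            (fun hh => hw'.2 hh.symm) hneww hs.1 hs.2
          rw [heq]; exact hs'.2
        exact absurd (hbig h.choose) (by omega)
    omega


lemma deg_erase_erase (p q : V) (T : Finset V) (c : C) :
    chkDeg N ((T.erase p).erase q) c = (((T.filter fun v => c ∈ N v).erase p).erase q).card := by
  rw [chkDeg, Finset.filter_erase, Finset.filter_erase]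


lemma lemA (hreg : ∀ v, (N v).card = 5)
    (hgirth : ∀ v w : V, v ≠ w → (N v ∩ N w).card ≤ 1)
    (T : Finset V) (hT : T.card = 4)
    (hcov : ∀ v ∈ T, ∀ w ∈ T, v ≠ w → (N v ∩ N w).Nonempty)
    (hbig : ∀ c, chkDeg N T c ≤ 2) :
    isAbsorbing N T ∧ (oddChecks N T).card = 8 := by
  have heven : ∀ {v : V}, v ∈ T → ((N v).filter fun c => chkDeg N T c % 2 = 0).card = 3 :=
    fun {v} hv => even_filter_card N hreg hgirth T hT hcov hbig hv
  constructor
  · intro v hv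
    have hsplit : ((N v).filter fun c => chkDeg N T c % 2 = 1).card
        + ((N v).filter fun c => ¬ (chkDeg N T c % 2 = 1)).card = (N v).card :=
      Finset.card_filter_add_card_filter_not _
    have hfc : ((N v).filter fun c => ¬ (chkDeg N T c % 2 = 1))
        = ((N v).filter fun c => chkDeg N T c % 2 = 0) := by
      apply Finset.filter_congr
      intro c _
      constructor <;> intro h <;> omega
    rw [hfc, heven hv, hreg] at hsplit
    rw [heven hv]
    omega
  · have htot : ∑ c ∈ T.biUnion N, chkDeg N T c = 20 := by
      rw [dc_total N T]
      rw [Finset.sum_congr rfl (fun v _ => hreg v), Finset.sum_const, hT]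
      norm_num
    have hsplit := Finset.sum_filter_add_sum_filter_not (T.biUnion N)
      (fun c => chkDeg N T c % 2 = 1) (fun c => chkDeg N T c)
    have hfc : ((T.biUnion N).filter fun c => ¬ (chkDeg N T c % 2 = 1))
        = ((T.biUnion N).filter fun c => chkDeg N T c % 2 = 0) := by
      apply Finset.filter_congr
      intro c _
      constructor <;> intro h <;> omega
    rw [hfc] at hsplit
    have heq12 : ∑ c ∈ (T.biUnion N).filter fun c => chkDeg N T c % 2 = 0,
        chkDeg N T c = 12 := by
      rw [dc N T (fun c => chkDeg N T c % 2 = 0)]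
      rw [Finset.sum_congr rfl (fun v hv => heven hv), Finset.sum_const, hT]
      norm_num
    have hodd1 : ∑ c ∈ (T.biUnion N).filter fun c => chkDeg N T c % 2 = 1,
        chkDeg N T c = (oddChecks N T).card := by
      have hone : ∀ c ∈ (T.biUnion N).filter fun c => chkDeg N T c % 2 = 1,
          chkDeg N T c = 1 := by
        intro c hc
        rw [mem_filter] at hc
        have h1 : 0 < chkDeg N T c := deg_pos N hc.1
        have h2 := hbig c
        have h3 := hc.2
        omega
      rw [Finset.sum_congr rfl hone, Finset.sum_const, smul_eq_mul, mul_one, oddChecks]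
    omega

lemma buildT (hreg : ∀ v, (N v).card = 5)
    (hgirth : ∀ v w : V, v ≠ w → (N v ∩ N w).card ≤ 1)
    (S : Finset V) (hS : S.card = 6) (p q : V) (hp : p ∈ S) (hq : q ∈ S) (hpq : p ≠ q)
    (hcov : ∀ v ∈ S, ∀ w ∈ S, v ≠ w → v ≠ p → v ≠ q → w ≠ p → w ≠ q → (N v ∩ N w).Nonempty)
    (hdeg : ∀ c, 3 ≤ chkDeg N S c → chkDeg N ((S.erase p).erase q) c ≤ 2) :
    ∃ T ⊆ S, T.card = 4 ∧ isAbsorbing N T ∧ (oddChecks N T).card = 8 := by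
  set T := (S.erase p).erase q with hTdef
  have hTS : T ⊆ S := (erase_subset _ _).trans (erase_subset _ _)
  have hTcard : T.card = 4 := by
    rw [hTdef, card_erase_of_mem (mem_erase.mpr ⟨hpq.symm, hq⟩), card_erase_of_mem hp, hS]
  have hbig : ∀ c, chkDeg N T c ≤ 2 := by
    intro c
    by_contra h
    push_neg at h
    have hmono : chkDeg N T c ≤ chkDeg N S c :=
      Finset.card_le_card (Finset.filter_subset_filter _ hTS)
    have := hdeg c (by omega)
    omega
  have hcovT : ∀ v ∈ T, ∀ w ∈ T, v ≠ w → (N v ∩ N w).Nonempty := by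
    intro v hv w hw hvw
    rw [hTdef, mem_erase, mem_erase] at hv hw
    exact hcov v hv.2.2 w hw.2.2 hvw hv.2.1 hv.1 hw.2.1 hw.1
  obtain ⟨h1, h2⟩ := lemA N hreg hgirth T hTcard hcovT hbig
  exact ⟨T, hTS, hTcard, h1, h2⟩

end AbsAux

open AbsAux in
theorem six_eight_highdeg_contains_48 {V C : Type*} [DecidableEq V] [DecidableEq C]
    (N : V → Finset C)
    (hreg : ∀ v, (N v).card = 5)
    (hgirth : ∀ v w : V, v ≠ w → (N v ∩ N w).card ≤ 1)
    (S : Finset V) (hS : S.card = 6) (habs : isAbsorbing N S)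
    (hodd : (oddChecks N S).card = 8)
    (hc : ∃ c ∈ S.biUnion N, 2 < chkDeg N S c) :
    ∃ T ⊆ S, T.card = 4 ∧ isAbsorbing N T ∧ (oddChecks N T).card = 8 := by
  classical
  -- per-vertex number of odd checks is at most 2
  have hodd2 : ∀ v ∈ S, ((N v).filter fun c => chkDeg N S c % 2 = 1).card ≤ 2 := by
    intro v hv
    have h := habs v hv
    have hsplit : ((N v).filter fun c => chkDeg N S c % 2 = 1).card
        + ((N v).filter fun c => ¬(chkDeg N S c % 2 = 1)).card = (N v).card :=
      Finset.card_filter_add_card_filter_not _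
    have hfc : ((N v).filter fun c => ¬(chkDeg N S c % 2 = 1))
        = ((N v).filter fun c => chkDeg N S c % 2 = 0) := by
      apply Finset.filter_congr
      intro c _
      constructor <;> intro hh <;> omega
    rw [hfc, hreg] at hsplit
    omega
  have hdeg6 : ∀ c, chkDeg N S c ≤ 6 := fun c => hS ▸ deg_le N S c
  -- the four counting identities
  have hfibA := fiber N S (fun d => d)
  have hfibB := fiber N S (fun d => d * (d - 1))
  have hfibC := fiber N S (fun d => d % 2)
  have hfibD := fiber N S (fun d => d % 2 * d)
  rw [hS] at hfibA hfibB hfibC hfibD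
  simp only [Finset.sum_range_succ, Finset.sum_range_zero] at hfibA hfibB hfibC hfibD
  norm_num at hfibA hfibB hfibC hfibD
  have hLA : ∑ c ∈ S.biUnion N, chkDeg N S c = 30 := by
    rw [dc_total N S, Finset.sum_congr rfl (fun v _ => hreg v), Finset.sum_const, hS]
    norm_num
  have hg := gsum N S
  have hcc := cov_count N hgirth S
  rw [hS] at hcc
  norm_num at hcc
  rw [hg] at hfibB
  have hLC : ∑ c ∈ S.biUnion N, chkDeg N S c % 2 = 8 := by
    have e1 : ∀ c ∈ S.biUnion N, chkDeg N S c % 2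
        = if chkDeg N S c % 2 = 1 then 1 else 0 := by
      intro c _
      rcases Nat.mod_two_eq_zero_or_one (chkDeg N S c) with h|h <;> simp [h]
    rw [Finset.sum_congr rfl e1, ← Finset.card_filter]
    exact hodd
  have hLD : ∑ c ∈ S.biUnion N, chkDeg N S c % 2 * chkDeg N S c ≤ 12 := by
    have e1 : ∀ c ∈ S.biUnion N, chkDeg N S c % 2 * chkDeg N S c
        = if chkDeg N S c % 2 = 1 then chkDeg N S c else 0 := by
      intro c _
      rcases Nat.mod_two_eq_zero_or_one (chkDeg N S c) with h|h <;> simp [h]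
    rw [Finset.sum_congr rfl e1, ← Finset.sum_filter,
      dc N S (fun c => chkDeg N S c % 2 = 1)]
    calc ∑ v ∈ S, ((N v).filter fun c => chkDeg N S c % 2 = 1).card
        ≤ ∑ _v ∈ S, 2 := Finset.sum_le_sum hodd2
      _ = 12 := by rw [Finset.sum_const, hS]; norm_num
  -- existence of a check of degree ≥ 3
  obtain ⟨c₀, hc₀X, hc₀3⟩ := hc
  have hcid : ∀ c : C, 3 ≤ chkDeg N S c →
      c ∈ (S.biUnion N).filter (fun c => chkDeg N S c = 3) ∨
      c ∈ (S.biUnion N).filter (fun c => chkDeg N S c = 4) ∨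
      c ∈ (S.biUnion N).filter (fun c => chkDeg N S c = 5) ∨
      c ∈ (S.biUnion N).filter (fun c => chkDeg N S c = 6) := by
    intro c h3
    have h6 := hdeg6 c
    have hX : c ∈ S.biUnion N := mem_biUnion_of_deg_pos N (by omega)
    have hcases : chkDeg N S c = 3 ∨ chkDeg N S c = 4 ∨ chkDeg N S c = 5
        ∨ chkDeg N S c = 6 := by omega
    rcases hcases with h|h|h|h
    · exact Or.inl (mem_filter.mpr ⟨hX, h⟩)
    · exact Or.inr (Or.inl (mem_filter.mpr ⟨hX, h⟩))
    · exact Or.inr (Or.inr (Or.inl (mem_filter.mpr ⟨hX, h⟩)))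
    · exact Or.inr (Or.inr (Or.inr (mem_filter.mpr ⟨hX, h⟩)))
  have hpos : 1 ≤ ((S.biUnion N).filter (fun c => chkDeg N S c = 3)).card
      + ((S.biUnion N).filter (fun c => chkDeg N S c = 4)).card
      + ((S.biUnion N).filter (fun c => chkDeg N S c = 5)).card
      + ((S.biUnion N).filter (fun c => chkDeg N S c = 6)).card := by
    rcases hcid c₀ (by omega) with h|h|h|h <;>
      · have := Finset.card_pos.mpr ⟨c₀, h⟩
        omega
  -- classification of the configuration
  have hcase :
      (((S.biUnion N).filter (fun c => chkDeg N S c = 4)).card = 1 ∧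
       ((S.biUnion N).filter (fun c => chkDeg N S c = 3)).card = 0 ∧
       ((S.biUnion N).filter (fun c => chkDeg N S c = 5)).card = 0 ∧
       ((S.biUnion N).filter (fun c => chkDeg N S c = 6)).card = 0 ∧
       (S.offDiag.filter fun p => N p.1 ∩ N p.2 = ∅).card = 0) ∨
      (((S.biUnion N).filter (fun c => chkDeg N S c = 3)).card = 1 ∧
       ((S.biUnion N).filter (fun c => chkDeg N S c = 4)).card = 0 ∧
       ((S.biUnion N).filter (fun c => chkDeg N S c = 5)).card = 0 ∧
       ((S.biUnion N).filter (fun c => chkDeg N S c = 6)).card = 0 ∧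
       (S.offDiag.filter fun p => N p.1 ∩ N p.2 = ∅).card ≤ 4) ∨
      (((S.biUnion N).filter (fun c => chkDeg N S c = 3)).card = 2 ∧
       ((S.biUnion N).filter (fun c => chkDeg N S c = 4)).card = 0 ∧
       ((S.biUnion N).filter (fun c => chkDeg N S c = 5)).card = 0 ∧
       ((S.biUnion N).filter (fun c => chkDeg N S c = 6)).card = 0 ∧
       (S.offDiag.filter fun p => N p.1 ∩ N p.2 = ∅).card = 0) := by
    omega
  rcases hcase with ⟨hn4, hn3, hn5, hn6, hU0⟩ | ⟨hn3, hn4, hn5, hn6, hU4⟩ |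
    ⟨hn3, hn4, hn5, hn6, hU0⟩
  · -- Case 1 : a single check of degree 4
    obtain ⟨b, hb⟩ := Finset.card_eq_one.mp hn4
    have hbmem : b ∈ (S.biUnion N).filter (fun c => chkDeg N S c = 4) := by
      rw [hb]; exact Finset.mem_singleton_self b
    have hbdeg : chkDeg N S b = 4 := (mem_filter.mp hbmem).2
    have hbset4 : (S.filter fun v => b ∈ N v).card = 4 := hbdeg
    obtain ⟨p, hpmem⟩ : (S.filter fun v => b ∈ N v).Nonempty :=
      card_pos.mp (by rw [hbset4]; norm_num)
    obtain ⟨q, hqmem⟩ : ((S.filter fun v => b ∈ N v).erase p).Nonempty :=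
      card_pos.mp (by rw [card_erase_of_mem hpmem, hbset4]; norm_num)
    have hq' := Finset.mem_erase.mp hqmem
    apply buildT N hreg hgirth S hS p q (mem_filter.mp hpmem).1 (mem_filter.mp hq'.2).1
      (fun h => hq'.1 h.symm)
    · intro v hv w hw hvw _ _ _ _
      by_contra hno
      rw [not_nonempty_iff_eq_empty] at hno
      have hz : (v, w) ∈ S.offDiag.filter (fun p => N p.1 ∩ N p.2 = ∅) :=
        mem_filter.mpr ⟨mem_offDiag.mpr ⟨hv, hw, hvw⟩, hno⟩
      have := card_pos.mpr ⟨_, hz⟩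
      omega
    · intro c h3
      rcases hcid c h3 with h|h|h|h
      · rw [card_eq_zero.mp hn3] at h; exact absurd h (notMem_empty c)
      · have hcb : c = b := by rw [hb] at h; exact mem_singleton.mp h
        rw [hcb, deg_erase_erase, card_erase_of_mem hqmem, card_erase_of_mem hpmem, hbset4]
      · rw [card_eq_zero.mp hn5] at h; exact absurd h (notMem_empty c)
      · rw [card_eq_zero.mp hn6] at h; exact absurd h (notMem_empty c)
  · -- Case 2 : a single check of degree 3, at most two uncovered pairs
    obtain ⟨b, hb⟩ := Finset.card_eq_one.mp hn3
    have hbmem : b ∈ (S.biUnion N).filter (fun c => chkDeg N S c = 3) := by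
      rw [hb]; exact Finset.mem_singleton_self b
    have hbdeg : chkDeg N S b = 3 := (mem_filter.mp hbmem).2
    have hbset3 : (S.filter fun v => b ∈ N v).card = 3 := hbdeg
    have getq : ∀ x : V, ∃ y, y ∈ (S.filter fun v => b ∈ N v) ∧ y ≠ x := by
      intro x
      by_cases hx : x ∈ (S.filter fun v => b ∈ N v)
      · have hpos2 : 0 < ((S.filter fun v => b ∈ N v).erase x).card := by
          rw [card_erase_of_mem hx, hbset3]; norm_num
        obtain ⟨y, hy⟩ := card_pos.mp hpos2
        exact ⟨y, (mem_erase.mp hy).2, (mem_erase.mp hy).1⟩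
      · obtain ⟨y, hy⟩ := card_pos.mp (show 0 < (S.filter fun v => b ∈ N v).card by
          rw [hbset3]; norm_num)
        exact ⟨y, hy, fun h => hx (h ▸ hy)⟩
    have hMsymm : ∀ z ∈ S.offDiag.filter (fun p => N p.1 ∩ N p.2 = ∅),
        (z.2, z.1) ∈ S.offDiag.filter (fun p => N p.1 ∩ N p.2 = ∅) := by
      rintro ⟨x, y⟩ hz
      rw [mem_filter, mem_offDiag] at hz ⊢
      refine ⟨⟨hz.1.2.1, hz.1.1, Ne.symm hz.1.2.2⟩, ?_⟩
      rw [Finset.inter_comm]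
      exact hz.2
    have key : ∀ p q : V, p ∈ S → q ∈ S → p ≠ q →
        (p ∈ (S.filter fun v => b ∈ N v) ∨ q ∈ (S.filter fun v => b ∈ N v)) →
        (∀ z ∈ S.offDiag.filter (fun p => N p.1 ∩ N p.2 = ∅),
          z.1 = p ∨ z.1 = q ∨ z.2 = p ∨ z.2 = q) →
        ∃ T ⊆ S, T.card = 4 ∧ isAbsorbing N T ∧ (oddChecks N T).card = 8 := by
      intro p q hp hq hpq hhb hhit
      apply buildT N hreg hgirth S hS p q hp hq hpq
      · intro v hv w hw hvw hvp hvq hwp hwq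
        by_contra hno
        rw [not_nonempty_iff_eq_empty] at hno
        have hz : (v, w) ∈ S.offDiag.filter (fun p => N p.1 ∩ N p.2 = ∅) :=
          mem_filter.mpr ⟨mem_offDiag.mpr ⟨hv, hw, hvw⟩, hno⟩
        rcases hhit _ hz with h|h|h|h
        · exact hvp h
        · exact hvq h
        · exact hwp h
        · exact hwq h
      · intro c h3
        rcases hcid c h3 with h|h|h|h
        · have hcb : c = b := by rw [hb] at h; exact mem_singleton.mp h
          rw [hcb, deg_erase_erase]
          rcases hhb with hhb | hhb
          · have h1 : ((S.filter fun v => b ∈ N v).erase p).card = 2 := by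
              rw [card_erase_of_mem hhb, hbset3]
            calc (((S.filter fun v => b ∈ N v).erase p).erase q).card
                ≤ ((S.filter fun v => b ∈ N v).erase p).card := Finset.card_erase_le
              _ = 2 := h1
          · have hq2 : q ∈ (S.filter fun v => b ∈ N v).erase p :=
              mem_erase.mpr ⟨fun h => hpq h.symm, hhb⟩
            have h2 : ((S.filter fun v => b ∈ N v).erase p).card ≤ 3 :=
              le_trans Finset.card_erase_le hbset3.le
            rw [card_erase_of_mem hq2]
            omega
        · rw [card_eq_zero.mp hn4] at h; exact absurd h (notMem_empty c)
        · rw [card_eq_zero.mp hn5] at h; exact absurd h (notMem_empty c)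
        · rw [card_eq_zero.mp hn6] at h; exact absurd h (notMem_empty c)
    rcases (S.offDiag.filter (fun p => N p.1 ∩ N p.2 = ∅)).eq_empty_or_nonempty with
      hMe | ⟨z1, hz1⟩
    · -- no uncovered pair
      obtain ⟨p, hpmem⟩ : (S.filter fun v => b ∈ N v).Nonempty :=
        card_pos.mp (by rw [hbset3]; norm_num)
      obtain ⟨q, hq2, hqp⟩ := getq p
      exact key p q (mem_filter.mp hpmem).1 (mem_filter.mp hq2).1 (fun h => hqp h.symm)
        (Or.inl hpmem) (by rw [hMe]; intro z hz; exact absurd hz (notMem_empty z))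
    · obtain ⟨a1, b1⟩ := z1
      have hz1' := mem_filter.mp hz1
      have hz1o := mem_offDiag.mp hz1'.1
      obtain ⟨ha1S, hb1S, hab1⟩ := hz1o
      rcases ((( S.offDiag.filter (fun p => N p.1 ∩ N p.2 = ∅)).erase (a1, b1)).erase
          (b1, a1)).eq_empty_or_nonempty with hM2e | ⟨z2, hz2⟩
      · -- exactly one uncovered pair {a1, b1}
        have hcover : ∀ z ∈ S.offDiag.filter (fun p => N p.1 ∩ N p.2 = ∅),
            z = (a1, b1) ∨ z = (b1, a1) := by
          intro z hz
          by_contra hcon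
          push_neg at hcon
          have : z ∈ ((S.offDiag.filter (fun p => N p.1 ∩ N p.2 = ∅)).erase (a1, b1)).erase
              (b1, a1) := mem_erase.mpr ⟨hcon.2, mem_erase.mpr ⟨hcon.1, hz⟩⟩
          rw [hM2e] at this
          exact absurd this (notMem_empty z)
        by_cases ha1b : a1 ∈ (S.filter fun v => b ∈ N v)
        · obtain ⟨q, hq2, hqp⟩ := getq a1
          refine key a1 q ha1S (mem_filter.mp hq2).1 (fun h => hqp h.symm) (Or.inl ha1b) ?_
          intro z hz
          rcases hcover z hz with rfl | rfl
          · exact Or.inl rfl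
          · exact Or.inr (Or.inr (Or.inl rfl))
        · by_cases hb1b : b1 ∈ (S.filter fun v => b ∈ N v)
          · obtain ⟨q, hq2, hqp⟩ := getq b1
            refine key b1 q hb1S (mem_filter.mp hq2).1 (fun h => hqp h.symm) (Or.inl hb1b) ?_
            intro z hz
            rcases hcover z hz with rfl | rfl
            · exact Or.inr (Or.inr (Or.inl rfl))
            · exact Or.inl rfl
          · obtain ⟨q, hq2, hqp⟩ := getq a1
            refine key a1 q ha1S (mem_filter.mp hq2).1 (fun h => hqp h.symm) (Or.inr hq2) ?_
            intro z hz
            rcases hcover z hz with rfl | rfl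
            · exact Or.inl rfl
            · exact Or.inr (Or.inr (Or.inl rfl))
      · -- two uncovered pairs
        obtain ⟨a2, b2⟩ := z2
        have hz2e := mem_erase.mp hz2
        have hz2e' := mem_erase.mp hz2e.2
        have hz2M : (a2, b2) ∈ S.offDiag.filter (fun p => N p.1 ∩ N p.2 = ∅) := hz2e'.2
        have hz2' := mem_filter.mp hz2M
        obtain ⟨ha2S, hb2S, hab2⟩ := mem_offDiag.mp hz2'.1
        have hne21 : (a2, b2) ≠ (a1, b1) := hz2e'.1
        have hne21' : (a2, b2) ≠ (b1, a1) := hz2e.1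
        have hcover : ∀ z ∈ S.offDiag.filter (fun p => N p.1 ∩ N p.2 = ∅),
            z = (a1, b1) ∨ z = (b1, a1) ∨ z = (a2, b2) ∨ z = (b2, a2) := by
          have hsub : ({(a1, b1), (b1, a1), (a2, b2), (b2, a2)} : Finset (V × V)) ⊆
              S.offDiag.filter (fun p => N p.1 ∩ N p.2 = ∅) := by
            intro z hz
            simp only [Finset.mem_insert, Finset.mem_singleton] at hz
            rcases hz with rfl | rfl | rfl | rfl
            · exact hz1
            · exact hMsymm _ hz1
            · exact hz2M
            · exact hMsymm _ hz2M
          have m1 : (a1, b1) ∉ ({(b1, a1), (a2, b2), (b2, a2)} : Finset (V × V)) := by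
            simp only [Finset.mem_insert, Finset.mem_singleton]
            push_neg
            refine ⟨?_, Ne.symm hne21, ?_⟩
            · intro h
              rw [Prod.ext_iff] at h
              exact hab1 h.1
            · intro h
              rw [Prod.ext_iff] at h
              exact hne21' (Prod.ext_iff.mpr ⟨h.2.symm, h.1.symm⟩)
          have m2 : (b1, a1) ∉ ({(a2, b2), (b2, a2)} : Finset (V × V)) := by
            simp only [Finset.mem_insert, Finset.mem_singleton]
            push_neg
            refine ⟨Ne.symm hne21', ?_⟩
            intro h
            rw [Prod.ext_iff] at h
            exact hne21 (Prod.ext_iff.mpr ⟨h.2.symm, h.1.symm⟩)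
          have m3 : (a2, b2) ≠ (b2, a2) := by
            intro h
            rw [Prod.ext_iff] at h
            exact hab2 h.1
          have hcard4 : ({(a1, b1), (b1, a1), (a2, b2), (b2, a2)} : Finset (V × V)).card
              = 4 := by
            rw [Finset.card_insert_of_notMem m1, Finset.card_insert_of_notMem m2,
              Finset.card_pair m3]
          have hMeq : S.offDiag.filter (fun p => N p.1 ∩ N p.2 = ∅)
              = ({(a1, b1), (b1, a1), (a2, b2), (b2, a2)} : Finset (V × V)) :=
            (Finset.eq_of_subset_of_card_le hsub (by rw [hcard4]; exact hU4)).symm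
          intro z hz
          rw [hMeq] at hz
          simpa using hz
        by_cases hshare : a2 = a1 ∨ a2 = b1 ∨ b2 = a1 ∨ b2 = b1
        · rcases hshare with h | h | h | h
          · obtain ⟨q, hq2, hqp⟩ := getq a1
            refine key a1 q ha1S (mem_filter.mp hq2).1 (fun hh => hqp hh.symm)
              (Or.inr hq2) ?_
            intro z hz
            rcases hcover z hz with rfl | rfl | rfl | rfl
            · exact Or.inl rfl
            · exact Or.inr (Or.inr (Or.inl rfl))
            · exact Or.inl h
            · exact Or.inr (Or.inr (Or.inl h))
          · obtain ⟨q, hq2, hqp⟩ := getq b1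
            refine key b1 q hb1S (mem_filter.mp hq2).1 (fun hh => hqp hh.symm)
              (Or.inr hq2) ?_
            intro z hz
            rcases hcover z hz with rfl | rfl | rfl | rfl
            · exact Or.inr (Or.inr (Or.inl rfl))
            · exact Or.inl rfl
            · exact Or.inl h
            · exact Or.inr (Or.inr (Or.inl h))
          · obtain ⟨q, hq2, hqp⟩ := getq a1
            refine key a1 q ha1S (mem_filter.mp hq2).1 (fun hh => hqp hh.symm)
              (Or.inr hq2) ?_
            intro z hz
            rcases hcover z hz with rfl | rfl | rfl | rfl
            · exact Or.inl rfl
            · exact Or.inr (Or.inr (Or.inl rfl))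
            · exact Or.inr (Or.inr (Or.inl h))
            · exact Or.inl h
          · obtain ⟨q, hq2, hqp⟩ := getq b1
            refine key b1 q hb1S (mem_filter.mp hq2).1 (fun hh => hqp hh.symm)
              (Or.inr hq2) ?_
            intro z hz
            rcases hcover z hz with rfl | rfl | rfl | rfl
            · exact Or.inr (Or.inr (Or.inl rfl))
            · exact Or.inl rfl
            · exact Or.inr (Or.inr (Or.inl h))
            · exact Or.inl h
        · push_neg at hshare
          obtain ⟨hd1, hd2, hd3, hd4⟩ := hshare
          have m1 : a1 ∉ ({b1, a2, b2} : Finset V) := by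
            simp only [Finset.mem_insert, Finset.mem_singleton]
            push_neg
            exact ⟨hab1, Ne.symm hd1, Ne.symm hd3⟩
          have m2 : b1 ∉ ({a2, b2} : Finset V) := by
            simp only [Finset.mem_insert, Finset.mem_singleton]
            push_neg
            exact ⟨Ne.symm hd2, Ne.symm hd4⟩
          have hEcard : ({a1, b1, a2, b2} : Finset V).card = 4 := by
            rw [Finset.card_insert_of_notMem m1, Finset.card_insert_of_notMem m2,
              Finset.card_pair hab2]
          have hEsub : ({a1, b1, a2, b2} : Finset V) ⊆ S := by
            intro x hx
            simp only [Finset.mem_insert, Finset.mem_singleton] at hx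
            rcases hx with rfl | rfl | rfl | rfl
            · exact ha1S
            · exact hb1S
            · exact ha2S
            · exact hb2S
          have hunion : ((S.filter fun v => b ∈ N v) ∪ ({a1, b1, a2, b2} : Finset V)).card
              ≤ 6 := by
            rw [← hS]
            exact Finset.card_le_card (Finset.union_subset (Finset.filter_subset _ _) hEsub)
          have hintcard := Finset.card_union_add_card_inter (S.filter fun v => b ∈ N v)
            ({a1, b1, a2, b2} : Finset V)
          have hint : ((S.filter fun v => b ∈ N v) ∩ ({a1, b1, a2, b2} : Finset V)).Nonempty := by
            rw [← card_pos]
            omega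
          obtain ⟨x, hx⟩ := hint
          have hxb : x ∈ (S.filter fun v => b ∈ N v) := (mem_inter.mp hx).1
          have hxE := (mem_inter.mp hx).2
          simp only [Finset.mem_insert, Finset.mem_singleton] at hxE
          rcases hxE with rfl | rfl | rfl | rfl
          · refine key x a2 ha1S ha2S (fun hh => hd1 hh.symm) (Or.inl hxb) ?_
            intro z hz
            rcases hcover z hz with rfl | rfl | rfl | rfl
            · exact Or.inl rfl
            · exact Or.inr (Or.inr (Or.inl rfl))
            · exact Or.inr (Or.inl rfl)
            · exact Or.inr (Or.inr (Or.inr rfl))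
          · refine key x a2 hb1S ha2S (fun hh => hd2 hh.symm) (Or.inl hxb) ?_
            intro z hz
            rcases hcover z hz with rfl | rfl | rfl | rfl
            · exact Or.inr (Or.inr (Or.inl rfl))
            · exact Or.inl rfl
            · exact Or.inr (Or.inl rfl)
            · exact Or.inr (Or.inr (Or.inr rfl))
          · refine key x a1 ha2S ha1S hd1 (Or.inl hxb) ?_
            intro z hz
            rcases hcover z hz with rfl | rfl | rfl | rfl
            · exact Or.inr (Or.inl rfl)
            · exact Or.inr (Or.inr (Or.inr rfl))
            · exact Or.inl rfl
            · exact Or.inr (Or.inr (Or.inl rfl))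
          · refine key x a1 hb2S ha1S hd3 (Or.inl hxb) ?_
            intro z hz
            rcases hcover z hz with rfl | rfl | rfl | rfl
            · exact Or.inr (Or.inl rfl)
            · exact Or.inr (Or.inr (Or.inr rfl))
            · exact Or.inr (Or.inr (Or.inl rfl))
            · exact Or.inl rfl
  · -- Case 3 : two checks of degree 3
    obtain ⟨b1, b2, hb12, hbeq⟩ := Finset.card_eq_two.mp hn3
    have hb1mem : b1 ∈ (S.biUnion N).filter (fun c => chkDeg N S c = 3) := by
      rw [hbeq]; exact Finset.mem_insert_self _ _
    have hb2mem : b2 ∈ (S.biUnion N).filter (fun c => chkDeg N S c = 3) := by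
      rw [hbeq]; exact Finset.mem_insert_of_mem (Finset.mem_singleton_self _)
    have hbset1 : (S.filter fun v => b1 ∈ N v).card = 3 := (mem_filter.mp hb1mem).2
    have hbset2 : (S.filter fun v => b2 ∈ N v).card = 3 := (mem_filter.mp hb2mem).2
    obtain ⟨p, hpmem⟩ : (S.filter fun v => b1 ∈ N v).Nonempty :=
      card_pos.mp (by rw [hbset1]; norm_num)
    have getq : ∃ y, y ∈ (S.filter fun v => b2 ∈ N v) ∧ y ≠ p := by
      by_cases hx : p ∈ (S.filter fun v => b2 ∈ N v)
      · have hpos2 : 0 < ((S.filter fun v => b2 ∈ N v).erase p).card := by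
          rw [card_erase_of_mem hx, hbset2]; norm_num
        obtain ⟨y, hy⟩ := card_pos.mp hpos2
        exact ⟨y, (mem_erase.mp hy).2, (mem_erase.mp hy).1⟩
      · obtain ⟨y, hy⟩ := card_pos.mp (show 0 < (S.filter fun v => b2 ∈ N v).card by
          rw [hbset2]; norm_num)
        exact ⟨y, hy, fun h => hx (h ▸ hy)⟩
    obtain ⟨q, hq2, hqp⟩ := getq
    apply buildT N hreg hgirth S hS p q (mem_filter.mp hpmem).1 (mem_filter.mp hq2).1
      (fun h => hqp h.symm)
    · intro v hv w hw hvw _ _ _ _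
      by_contra hno
      rw [not_nonempty_iff_eq_empty] at hno
      have hz : (v, w) ∈ S.offDiag.filter (fun p => N p.1 ∩ N p.2 = ∅) :=
        mem_filter.mpr ⟨mem_offDiag.mpr ⟨hv, hw, hvw⟩, hno⟩
      have := card_pos.mpr ⟨_, hz⟩
      omega
    · intro c h3
      rcases hcid c h3 with h|h|h|h
      · rw [hbeq] at h
        rcases Finset.mem_insert.mp h with rfl | h
        · rw [deg_erase_erase]
          have h1 : ((S.filter fun v => c ∈ N v).erase p).card = 2 := by
            rw [card_erase_of_mem hpmem, hbset1]
          calc (((S.filter fun v => c ∈ N v).erase p).erase q).card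
              ≤ ((S.filter fun v => c ∈ N v).erase p).card := Finset.card_erase_le
            _ = 2 := h1
        · have hcb : c = b2 := Finset.mem_singleton.mp h
          rw [hcb, deg_erase_erase]
          have hq3 : q ∈ (S.filter fun v => b2 ∈ N v).erase p := mem_erase.mpr ⟨hqp, hq2⟩
          have h2 : ((S.filter fun v => b2 ∈ N v).erase p).card ≤ 3 :=
            le_trans Finset.card_erase_le hbset2.le
          rw [card_erase_of_mem hq3]
          omega
      · rw [card_eq_zero.mp hn4] at h; exact absurd h (notMem_empty c)
      · rw [card_eq_zero.mp hn5] at h; exact absurd h (notMem_empty c)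
      · rw [card_eq_zero.mp hn6] at h; exact absurd h (notMem_empty c)
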